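/- Let the sequences (α_k), (A_k) satisfy A_0 = 0, A_{k+1} = A_k + α_{k+1}, and A_{k+1}(1 + A_k μ) = L α_{k+1}² with L ≥ μ > 0 and α_{k+1} the largest root of this quadratic. Then A_N ≥ (1/(2L))·exp(((N-1)/2)·√(μ/L)) for all N ≥ 1. -/
import Mathlib


/-- Growth estimate for the coefficient sequence of the fast gradient method:
`A_N ≥ (1/(2L))·exp(((N-1)/2)√(μ/L))`. -/
theorem A_growth (A α : ℕ → ℝ) (L μ : ℝ) (hμ : 0 < μ) (hLμ : μ ≤ L)
    (hA0 : A 0 = 0)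
    (hArec : ∀ k, A (k + 1) = A k + α (k + 1))
    (hαpos : ∀ k, 0 < α (k + 1))
    (hquad : ∀ k, A (k + 1) * (1 + A k * μ) = L * α (k + 1) ^ 2) :
    ∀ N : ℕ, 1 ≤ N →
      A N ≥ 1 / (2 * L) * Real.exp (((N : ℝ) - 1) / 2 * Real.sqrt (μ / L)) := by
  have hL : 0 < L := lt_of_lt_of_le hμ hLμ
  set q : ℝ := Real.sqrt (μ / L) with hqdef
  have hq0 : 0 < q := Real.sqrt_pos.2 (div_pos hμ hL)
  have hq2 : q ^ 2 = μ / L := Real.sq_sqrt (le_of_lt (div_pos hμ hL))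
  have hq1 : q ≤ 1 := by
    rw [hqdef, show (1 : ℝ) = Real.sqrt 1 by simp]
    exact Real.sqrt_le_sqrt ((div_le_one hL).2 hLμ)
  -- A 1 = 1/L
  have hA1 : A 1 = 1 / L := by
    have h0 := hquad 0
    have h1 := hArec 0
    rw [hA0] at h0 h1
    simp at h0 h1
    have hα1 : 0 < α 1 := hαpos 0
    have h2 : α 1 = L * α 1 ^ 2 := by rw [← h1] at h0 ⊢; exact h0
    have h3 : α 1 * 1 = α 1 * (L * α 1) := by rw [mul_one]; nth_rewrite 1 [h2]; ring
    have h4 : (1 : ℝ) = L * α 1 := mul_left_cancel₀ (ne_of_gt hα1) h3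
    rw [h1]
    field_simp
    linarith
  -- positivity and growth step
  have key : ∀ n : ℕ, 0 < A (n + 1) ∧ A (n + 1) ≥ (1 / L) * (1 + q) ^ n := by
    intro n
    induction n with
    | zero => constructor <;> simp [hA1] <;> positivity
    | succ k ih =>
      obtain ⟨hpos, hge⟩ := ih
      have hα : 0 < α (k + 2) := hαpos (k + 1)
      have hA2 : A (k + 2) = A (k + 1) + α (k + 2) := hArec (k + 1)
      have hq : A (k + 2) * (1 + A (k + 1) * μ) = L * α (k + 2) ^ 2 := hquad (k + 1)
      have hAk2 : A (k + 1) ≤ A (k + 2) := by linarith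
      -- L α² = A(k+2)(1 + A(k+1) μ) ≥ μ A(k+1)²
      have h1 : L * α (k + 2) ^ 2 ≥ μ * A (k + 1) ^ 2 := by
        calc L * α (k + 2) ^ 2 = A (k + 2) * (1 + A (k + 1) * μ) := hq.symm
          _ ≥ A (k + 2) * (A (k + 1) * μ) := by
              apply mul_le_mul_of_nonneg_left (by linarith) (by linarith)
          _ ≥ A (k + 1) * (A (k + 1) * μ) := by
              apply mul_le_mul_of_nonneg_right hAk2; positivity
          _ = μ * A (k + 1) ^ 2 := by ring
      -- hence α(k+2) ≥ q * A(k+1)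
      have h2 : q * A (k + 1) ≤ α (k + 2) := by
        have hsq : (q * A (k + 1)) ^ 2 ≤ α (k + 2) ^ 2 := by
          have : (q * A (k + 1)) ^ 2 = (μ / L) * A (k + 1) ^ 2 := by rw [mul_pow, hq2]
          rw [this]
          rw [div_mul_eq_mul_div, div_le_iff₀ hL]
          nlinarith
        nlinarith [mul_pos hq0 hpos]
      constructor
      · linarith
      · have : A (k + 2) ≥ (1 + q) * A (k + 1) := by nlinarith
        calc A (k + 2) ≥ (1 + q) * A (k + 1) := this
          _ ≥ (1 + q) * ((1 / L) * (1 + q) ^ k) := by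
              apply mul_le_mul_of_nonneg_left hge; linarith
          _ = (1 / L) * (1 + q) ^ (k + 1) := by ring
  -- exp(q/2) ≤ 1 + q
  have hexp : Real.exp (q / 2) ≤ 1 + q := by
    have h1 : 1 - q / 2 ≤ Real.exp (-(q / 2)) := by
      have := Real.add_one_le_exp (-(q / 2)); linarith
    have h2 : Real.exp (q / 2) * Real.exp (-(q / 2)) = 1 := by
      rw [← Real.exp_add]; simp
    have h3 : 0 < Real.exp (q / 2) := Real.exp_pos _
    nlinarith
  intro N hN
  obtain ⟨n, rfl⟩ := Nat.exists_eq_add_of_le hN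
  obtain ⟨hpos, hge⟩ := key n
  have hcast : ((1 + n : ℕ) : ℝ) - 1 = (n : ℝ) := by push_cast; ring
  rw [show 1 + n = n + 1 by ring, show (((n + 1 : ℕ) : ℝ) - 1) / 2 * q = (n : ℝ) * (q / 2) by push_cast; ring]
  have hexpn : Real.exp ((n : ℝ) * (q / 2)) ≤ (1 + q) ^ n := by
    rw [Real.exp_nat_mul]
    exact pow_le_pow_left₀ (le_of_lt (Real.exp_pos _)) hexp n
  have h4 : (1 : ℝ) / (2 * L) * Real.exp ((n : ℝ) * (q / 2)) ≤ (1 / L) * (1 + q) ^ n := by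
    have hE : 0 < Real.exp ((n : ℝ) * (q / 2)) := Real.exp_pos _
    have : (1 : ℝ) / (2 * L) ≤ 1 / L := by
      apply div_le_div_of_nonneg_left (by norm_num) hL; linarith
    calc (1 : ℝ) / (2 * L) * Real.exp ((n : ℝ) * (q / 2))
        ≤ (1 / L) * Real.exp ((n : ℝ) * (q / 2)) := by
          apply mul_le_mul_of_nonneg_right this (le_of_lt hE)
      _ ≤ (1 / L) * (1 + q) ^ n := by
          apply mul_le_mul_of_nonneg_left hexpn; positivity
  linarith
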